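/- If k + b² = 0, then the function T2 = q1 p1 + q2 p2 + q3 p3 satisfies Γ_H(Γ_H(T2)) = 0, i.e., the second derivative of T2 along the Hamiltonian flow vanishes, making T2 a master integral of degree 1. -/

import Mathlib

open scoped BigOperators

/-- Partial derivative of a function on phase space ℝ⁶ in the i-th coordinate. -/
noncomputable def pd (i : Fin 6) (f : (Fin 6 → ℝ) → ℝ) (x : Fin 6 → ℝ) : ℝ :=
  fderiv ℝ f x (Pi.single i 1)

/-- Canonical Poisson bracket on ℝ⁶ with coordinates (q1,q2,q3,p1,p2,p3). -/
noncomputable def pb (F G : (Fin 6 → ℝ) → ℝ) (x : Fin 6 → ℝ) : ℝ :=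
  (pd 0 F x * pd 3 G x - pd 3 F x * pd 0 G x) +
  (pd 1 F x * pd 4 G x - pd 4 F x * pd 1 G x) +
  (pd 2 F x * pd 5 G x - pd 5 F x * pd 2 G x)

/-- Angular momentum components: L1 = q2 p3 − q3 p2, etc. -/
def L1 (x : Fin 6 → ℝ) : ℝ := x 1 * x 5 - x 2 * x 4
def L2 (x : Fin 6 → ℝ) : ℝ := x 2 * x 3 - x 0 * x 5
def L3 (x : Fin 6 → ℝ) : ℝ := x 0 * x 4 - x 1 * x 3

/-- The Hamiltonian of the coupled oscillators with magnetic terms. -/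
noncomputable def Ham (b k : ℝ) (x : Fin 6 → ℝ) : ℝ :=
  (1/2) * (x 3 ^ 2 + x 4 ^ 2 + x 5 ^ 2) + b * (L1 x + L2 x + L3 x) +
  (1/2) * (b ^ 2 + k) * ((x 1 - x 0) ^ 2 + (x 2 - x 1) ^ 2 + (x 0 - x 2) ^ 2)

/-- J2 = p1 + p2 + p3. -/
def J2 (x : Fin 6 → ℝ) : ℝ := x 3 + x 4 + x 5

/-- J3 = L1 + L2 + L3. -/
def J3 (x : Fin 6 → ℝ) : ℝ := L1 x + L2 x + L3 x

/-- T2 = q1 p1 + q2 p2 + q3 p3. -/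
def T2 (x : Fin 6 → ℝ) : ℝ := x 0 * x 3 + x 1 * x 4 + x 2 * x 5

noncomputable def P (i : Fin 6) : (Fin 6 → ℝ) →L[ℝ] ℝ :=
  ContinuousLinearMap.proj i

lemma pd_of_hasFDerivAt {f : (Fin 6 → ℝ) → ℝ} {f' : (Fin 6 → ℝ) →L[ℝ] ℝ}
    {x : Fin 6 → ℝ} (h : HasFDerivAt f f' x) (i : Fin 6) :
    pd i f x = f' (Pi.single i 1) := by
  rw [pd, h.fderiv]

lemma hp (i : Fin 6) (x : Fin 6 → ℝ) :
    HasFDerivAt (fun y : Fin 6 → ℝ => y i) (P i) x :=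
  (P i).hasFDerivAt

lemma P_single (i j : Fin 6) : P i (Pi.single j 1) = if i = j then 1 else 0 := by
  by_cases h : i = j <;> simp [P, Pi.single_apply, h, eq_comm]

lemma hsq (i : Fin 6) (x : Fin 6 → ℝ) :
    HasFDerivAt (fun y : Fin 6 → ℝ => y i ^ 2) ((2 * x i) • P i) x := by
  have h := (hasDerivAt_pow 2 (x i)).comp_hasFDerivAt x (hp i x)
  simpa [Function.comp_def] using h

lemma hsq' (i j : Fin 6) (x : Fin 6 → ℝ) :
    HasFDerivAt (fun y : Fin 6 → ℝ => (y i - y j) ^ 2)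
      ((2 * (x i - x j)) • (P i - P j)) x := by
  have h := (hasDerivAt_pow 2 (x i - x j)).comp_hasFDerivAt x ((hp i x).sub (hp j x))
  simpa [Function.comp_def, Pi.sub_apply] using h

lemma hHam (b k : ℝ) (y : Fin 6 → ℝ) :
    HasFDerivAt (Ham b k)
      ((1/2 : ℝ) • (((2 * y 3) • P 3 + (2 * y 4) • P 4) + (2 * y 5) • P 5) +
        b • ((((y 1 • P 5 + y 5 • P 1) - (y 2 • P 4 + y 4 • P 2)) +
             ((y 2 • P 3 + y 3 • P 2) - (y 0 • P 5 + y 5 • P 0))) +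
             ((y 0 • P 4 + y 4 • P 0) - (y 1 • P 3 + y 3 • P 1))) +
        ((1/2) * (b ^ 2 + k)) •
          (((2 * (y 1 - y 0)) • (P 1 - P 0) + (2 * (y 2 - y 1)) • (P 2 - P 1)) +
            (2 * (y 0 - y 2)) • (P 0 - P 2))) y := by
  exact (((((hsq 3 y).add (hsq 4 y)).add (hsq 5 y)).const_mul (1/2)).add
      ((((((hp 1 y).mul (hp 5 y)).sub ((hp 2 y).mul (hp 4 y))).add
        (((hp 2 y).mul (hp 3 y)).sub ((hp 0 y).mul (hp 5 y)))).add
          (((hp 0 y).mul (hp 4 y)).sub ((hp 1 y).mul (hp 3 y)))).const_mul b)).add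
      (((((hsq' 1 0 y).add (hsq' 2 1 y)).add (hsq' 0 2 y)).const_mul ((1/2) * (b ^ 2 + k))))

lemma hT2 (y : Fin 6 → ℝ) :
    HasFDerivAt T2
      (((y 0 • P 3 + y 3 • P 0) + (y 1 • P 4 + y 4 • P 1)) + (y 2 • P 5 + y 5 • P 2)) y := by
  exact (((hp 0 y).mul (hp 3 y)).add ((hp 1 y).mul (hp 4 y))).add ((hp 2 y).mul (hp 5 y))

lemma inner_pb (b k : ℝ) (hk : k = -b ^ 2) (y : Fin 6 → ℝ) :
    pb T2 (Ham b k) y = y 3 ^ 2 + y 4 ^ 2 + y 5 ^ 2 := by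
  rw [pb, pd_of_hasFDerivAt (hT2 y), pd_of_hasFDerivAt (hT2 y), pd_of_hasFDerivAt (hT2 y),
    pd_of_hasFDerivAt (hT2 y), pd_of_hasFDerivAt (hT2 y), pd_of_hasFDerivAt (hT2 y),
    pd_of_hasFDerivAt (hHam b k y), pd_of_hasFDerivAt (hHam b k y),
    pd_of_hasFDerivAt (hHam b k y), pd_of_hasFDerivAt (hHam b k y),
    pd_of_hasFDerivAt (hHam b k y), pd_of_hasFDerivAt (hHam b k y)]
  simp only [ContinuousLinearMap.add_apply, ContinuousLinearMap.sub_apply,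
    ContinuousLinearMap.smul_apply, smul_eq_mul, P_single]
  simp
  subst hk
  ring

theorem stmt13 (b k : ℝ) (hk : k = -b^2) (x : Fin 6 → ℝ) :
    pb (fun y => pb T2 (Ham b k) y) (Ham b k) x = 0 := by
  have hG : (fun y => pb T2 (Ham b k) y) = fun y => y 3 ^ 2 + y 4 ^ 2 + y 5 ^ 2 :=
    funext fun y => inner_pb b k hk y
  rw [hG]
  have hQ : HasFDerivAt (fun y : Fin 6 → ℝ => y 3 ^ 2 + y 4 ^ 2 + y 5 ^ 2)
      (((2 * x 3) • P 3 + (2 * x 4) • P 4) + (2 * x 5) • P 5) x :=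
    ((hsq 3 x).add (hsq 4 x)).add (hsq 5 x)
  rw [pb, pd_of_hasFDerivAt hQ, pd_of_hasFDerivAt hQ, pd_of_hasFDerivAt hQ,
    pd_of_hasFDerivAt hQ, pd_of_hasFDerivAt hQ, pd_of_hasFDerivAt hQ,
    pd_of_hasFDerivAt (hHam b k x), pd_of_hasFDerivAt (hHam b k x),
    pd_of_hasFDerivAt (hHam b k x), pd_of_hasFDerivAt (hHam b k x),
    pd_of_hasFDerivAt (hHam b k x), pd_of_hasFDerivAt (hHam b k x)]
  simp only [ContinuousLinearMap.add_apply, ContinuousLinearMap.sub_apply,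
    ContinuousLinearMap.smul_apply, smul_eq_mul, P_single]
  simp
  subst hk
  ring
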